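/- Let 𝒢=(𝒱,ℰ) be a directed graph and let {G*_ij}_{(i,j)∈ℰ} be a collection of matrices in GL(d,ℝ) that is transitively consistent for 𝒢. Then all collections {G*_i}_{i∈𝒱} of matrices in GL(d,ℝ) satisfying G*_ij = G*_i^{−1}·G*_j for all (i,j)∈ℰ are equal up to transformation from the left if and only if 𝒢 is connected. -/

import Mathlib

open Matrix Kronecker

/-- An edge-indexed collection `G` of invertible matrices is *transitively consistent*
for the graph with vertex set `Fin n` and edge set `E` if it extends to a collection
indexed by all ordered pairs that is transitively consistent for the complete graph. -/
def TransConsistent (n d : ℕ) (E : Finset (Fin n × Fin n))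
    (G : Fin n → Fin n → Matrix (Fin d) (Fin d) ℝ) : Prop :=
  ∃ Gc : Fin n → Fin n → Matrix (Fin d) (Fin d) ℝ,
    (∀ i j, IsUnit (Gc i j)) ∧
    (∀ i j k, Gc i k = Gc i j * Gc j k) ∧
    (∀ i j, (i, j) ∈ E → Gc i j = G i j)

/-- The graph is connected: any two nodes are joined by an undirected path. -/
def UConnected (n : ℕ) (E : Finset (Fin n × Fin n)) : Prop :=
  ∀ i j : Fin n, Relation.ReflTransGen (fun a b => (a, b) ∈ E ∨ (b, a) ∈ E) i j

/-- The graph is quasi-strongly connected: it has a center, i.e. a node reachable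
from every node by a directed path. -/
def QSC (n : ℕ) (E : Finset (Fin n × Fin n)) : Prop :=
  ∃ c : Fin n, ∀ i : Fin n, Relation.ReflTransGen (fun a b => (a, b) ∈ E) i c

/-- The `Z`-matrix: the `(i,i)` block is `|N_i| • I_d`; for `i ≠ j` the `(i,j)` block is
`-G i j` if `(i,j)` is an edge and `0` otherwise. -/
def Zmat (n d : ℕ) (E : Finset (Fin n × Fin n))
    (G : Fin n → Fin n → Matrix (Fin d) (Fin d) ℝ) :
    Matrix (Fin n × Fin d) (Fin n × Fin d) ℝ :=
  fun p q =>
    if p.1 = q.1 then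
      ((E.filter fun e => e.1 = p.1).card : ℝ) * (if p.2 = q.2 then 1 else 0)
    else if (p.1, q.1) ∈ E then -G p.1 q.1 p.2 q.2 else 0

/-- The `H`-matrix: the `(i,i)` block is `|N_i| • I_d + ∑_{k : (k,i) ∈ E} (G k i)ᵀ * G k i`;
for `i ≠ j` the `(i,j)` block is `-[(i,j) ∈ E] • G i j - [(j,i) ∈ E] • (G j i)ᵀ`. -/
def Hmat (n d : ℕ) (E : Finset (Fin n × Fin n))
    (G : Fin n → Fin n → Matrix (Fin d) (Fin d) ℝ) :
    Matrix (Fin n × Fin d) (Fin n × Fin d) ℝ :=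
  fun p q =>
    if p.1 = q.1 then
      ((E.filter fun e => e.1 = p.1).card : ℝ) * (if p.2 = q.2 then 1 else 0)
        + ∑ k : Fin n, (if (k, p.1) ∈ E then ((G k p.1)ᵀ * G k p.1) p.2 q.2 else 0)
    else
      (if (p.1, q.1) ∈ E then -G p.1 q.1 p.2 q.2 else 0)
        + (if (q.1, p.1) ∈ E then -(G q.1 p.1)ᵀ p.2 q.2 else 0)

/-- Adjacency matrix of the graph. -/
def adjMat (n : ℕ) (E : Finset (Fin n × Fin n)) : Matrix (Fin n) (Fin n) ℝ :=
  fun i j => if (i, j) ∈ E then 1 else 0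

/-- Graph Laplacian `L = diag(A·1) - A`. -/
def lapMat (n : ℕ) (E : Finset (Fin n × Fin n)) : Matrix (Fin n) (Fin n) ℝ :=
  Matrix.diagonal (fun i => ∑ j, adjMat n E i j) - adjMat n E

/-- Block diagonal matrix `diag(G 1, …, G n)` with `d × d` blocks. -/
def blkDiag (n d : ℕ) (G : Fin n → Matrix (Fin d) (Fin d) ℝ) :
    Matrix (Fin n × Fin d) (Fin n × Fin d) ℝ :=
  fun p q => if p.1 = q.1 then G p.1 p.2 q.2 else 0

/-- `U₁({G_i})`: the block column matrix stacking `(G 1)⁻ᵀ, …, (G n)⁻ᵀ`. -/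
noncomputable def U1 (n d : ℕ) (G : Fin n → Matrix (Fin d) (Fin d) ℝ) :
    Matrix (Fin n × Fin d) (Fin d) ℝ :=
  fun p c => ((G p.1)⁻¹)ᵀ p.2 c

/-- The `i`-th `d × d` block of a block column matrix `X ∈ ℝ^{nd × d}`. -/
def blk (n d : ℕ) (X : Matrix (Fin n × Fin d) (Fin d) ℝ) (i : Fin n) :
    Matrix (Fin d) (Fin d) ℝ :=
  fun a b => X (i, a) b

/-- Frobenius norm of a real matrix. -/
noncomputable def frob {m k : Type*} [Fintype m] [Fintype k] (M : Matrix m k ℝ) : ℝ :=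
  Real.sqrt (∑ i, ∑ j, (M i j) ^ 2)

/-- Squared Frobenius norm of a real matrix. -/
def frobSq {m k : Type*} [Fintype m] [Fintype k] (M : Matrix m k ℝ) : ℝ :=
  ∑ i, ∑ j, (M i j) ^ 2

/-- Euclidean norm on `ℝ^m`. -/
noncomputable def euclNorm {m : Type*} [Fintype m] (x : m → ℝ) : ℝ :=
  Real.sqrt (∑ i, (x i) ^ 2)


private lemma mulinv {d : ℕ} (M : Matrix (Fin d) (Fin d) ℝ) (h : IsUnit M) :
    M * M⁻¹ = 1 :=
  Matrix.mul_nonsing_inv M ((Matrix.isUnit_iff_isUnit_det M).1 h)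

private lemma invmul {d : ℕ} (M : Matrix (Fin d) (Fin d) ℝ) (h : IsUnit M) :
    M⁻¹ * M = 1 :=
  Matrix.nonsing_inv_mul M ((Matrix.isUnit_iff_isUnit_det M).1 h)

private lemma smul2_unit {d : ℕ} (M : Matrix (Fin d) (Fin d) ℝ) (h : IsUnit M) :
    IsUnit ((2:ℝ) • M) := by
  rw [Matrix.isUnit_iff_isUnit_det, Matrix.det_smul, isUnit_iff_ne_zero]
  have hM : M.det ≠ 0 := by
    rw [← isUnit_iff_ne_zero, ← Matrix.isUnit_iff_isUnit_det]; exact h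
  positivity

private lemma smul2_inv {d : ℕ} (M : Matrix (Fin d) (Fin d) ℝ) (h : IsUnit M) :
    ((2:ℝ) • M)⁻¹ = (2:ℝ)⁻¹ • M⁻¹ := by
  apply Matrix.inv_eq_left_inv
  rw [smul_mul_smul_comm, invmul M h]
  norm_num

/-- all node collections factoring a transitively consistent edge collection
are equal up to left transformation iff the graph is connected. -/
theorem stmt3 (n d : ℕ) (hd : 0 < d) (E : Finset (Fin n × Fin n))
    (Gs : Fin n → Fin n → Matrix (Fin d) (Fin d) ℝ)
    (htc : TransConsistent n d E Gs) :
    (∀ G G' : Fin n → Matrix (Fin d) (Fin d) ℝ,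
        (∀ i, IsUnit (G i)) → (∀ i, IsUnit (G' i)) →
        (∀ i j, (i, j) ∈ E → Gs i j = (G i)⁻¹ * G j) →
        (∀ i j, (i, j) ∈ E → Gs i j = (G' i)⁻¹ * G' j) →
        ∃ Q : Matrix (Fin d) (Fin d) ℝ, IsUnit Q ∧ ∀ i, Q * G i = G' i)
      ↔ UConnected n E := by
  classical
  obtain ⟨Gc, hGcU, hGcT, hGcE⟩ := htc
  set rel : Fin n → Fin n → Prop := fun a b => (a, b) ∈ E ∨ (b, a) ∈ E with hrel
  constructor
  · intro huniq i0 j0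
    -- build G from Gc centered at i0
    have hGcI : ∀ i, Gc i i = 1 := by
      intro i
      have h2 : (Gc i i)⁻¹ * (Gc i i * Gc i i) = (Gc i i)⁻¹ * Gc i i := by
        rw [← hGcT i i i]
      rwa [← mul_assoc, invmul _ (hGcU i i), one_mul] at h2
    have hinv : ∀ i j, (Gc i j)⁻¹ = Gc j i := by
      intro i j
      apply Matrix.inv_eq_left_inv
      rw [← hGcT j i j, hGcI j]
    set G : Fin n → Matrix (Fin d) (Fin d) ℝ := fun i => Gc i0 i with hGdef
    have hGu : ∀ i, IsUnit (G i) := fun i => hGcU i0 i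
    have hGe : ∀ i j, (i, j) ∈ E → Gs i j = (G i)⁻¹ * G j := by
      intro i j hij
      rw [← hGcE i j hij, hGdef]
      simp only
      rw [hinv, ← hGcT i i0 j]
    set S : Fin n → Prop := fun i => Relation.ReflTransGen rel i0 i with hS
    set G' : Fin n → Matrix (Fin d) (Fin d) ℝ :=
      fun i => if S i then G i else (2:ℝ) • G i with hG'def
    have hG'u : ∀ i, IsUnit (G' i) := by
      intro i
      by_cases h : S i <;> simp only [hG'def, h, if_true, if_false, if_pos, if_neg]
      · simpa [h] using hGu i
      · simpa [h] using smul2_unit (G i) (hGu i)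
    have hG'e : ∀ i j, (i, j) ∈ E → Gs i j = (G' i)⁻¹ * G' j := by
      intro i j hij
      by_cases h : S i
      · have hj : S j := Relation.ReflTransGen.tail h (Or.inl hij)
        simp only [hG'def, if_pos h, if_pos hj]
        exact hGe i j hij
      · have hj : ¬ S j := by
          intro hj
          exact h (Relation.ReflTransGen.tail hj (Or.inr hij))
        simp only [hG'def, if_neg h, if_neg hj]
        rw [smul2_inv (G i) (hGu i), smul_mul_smul_comm]
        norm_num
        exact hGe i j hij
    obtain ⟨Q, hQu, hQ⟩ := huniq G G' hGu hG'u hGe hG'e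
    have hSi0 : S i0 := Relation.ReflTransGen.refl
    have hQ1 : Q = 1 := by
      have h0 := hQ i0
      simp only [hG'def, if_pos hSi0] at h0
      calc Q = Q * (G i0 * (G i0)⁻¹) := by rw [mulinv _ (hGu i0), mul_one]
        _ = (Q * G i0) * (G i0)⁻¹ := by rw [mul_assoc]
        _ = G i0 * (G i0)⁻¹ := by rw [h0]
        _ = 1 := mulinv _ (hGu i0)
    by_contra hj0
    have h0 := hQ j0
    simp only [hG'def, hQ1, one_mul, if_neg (show ¬ S j0 from hj0)] at h0
    have hzero : G j0 = 0 := by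
      funext a b
      have := congrFun (congrFun h0 a) b
      simp only [Matrix.smul_apply, smul_eq_mul, Matrix.zero_apply] at this ⊢
      linarith
    haveI hne : Nonempty (Fin d) := ⟨(⟨0, hd⟩ : Fin d)⟩
    have := hGu j0
    rw [hzero, Matrix.isUnit_iff_isUnit_det,
      Matrix.det_zero, isUnit_iff_ne_zero] at this
    exact this rfl
  · intro hconn G G' hGu hG'u h1 h2
    rcases Nat.eq_zero_or_pos n with hn | hn
    · refine ⟨1, isUnit_one, fun i => ?_⟩
      exact absurd i.isLt (by omega)
    set i0 : Fin n := ⟨0, hn⟩ with hi0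
    have key : ∀ a b : Fin n, rel a b → G' a * (G a)⁻¹ = G' b * (G b)⁻¹ := by
      have hstep : ∀ a b : Fin n, (a, b) ∈ E → G' a * (G a)⁻¹ = G' b * (G b)⁻¹ := by
        intro a b hab
        have heq : (G a)⁻¹ * G b = (G' a)⁻¹ * G' b := by
          rw [← h1 a b hab, ← h2 a b hab]
        have hb : G' a * ((G a)⁻¹ * G b) = G' b := by
          rw [heq, ← mul_assoc, mulinv _ (hG'u a), one_mul]
        calc G' a * (G a)⁻¹ = G' a * (G a)⁻¹ * (G b * (G b)⁻¹) := by
              rw [mulinv _ (hGu b), mul_one]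
          _ = (G' a * ((G a)⁻¹ * G b)) * (G b)⁻¹ := by simp only [mul_assoc]
          _ = G' b * (G b)⁻¹ := by rw [hb]
      intro a b hab
      rcases hab with h | h
      · exact hstep a b h
      · exact (hstep b a h).symm
    have hconst : ∀ i, G' i0 * (G i0)⁻¹ = G' i * (G i)⁻¹ := by
      intro i
      induction hconn i0 i with
      | refl => rfl
      | tail _ hbc ih => exact ih.trans (key _ _ hbc)
    refine ⟨G' i0 * (G i0)⁻¹, (hG'u i0).mul ((Matrix.isUnit_nonsing_inv_iff).2 (hGu i0)), fun i => ?_⟩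
    rw [hconst i, mul_assoc, invmul _ (hGu i), mul_one]
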